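/- arXiv:1409.4227 — 7 statements merged into one kernel-verified Lean document; each statement's English description precedes it below -/
import Mathlib

section
/- Let π be an involution of S_n and let M_π be its associated matching. Then L(π) = L(M_π), where L(π) = (ℓ(π)+k)/2 with ℓ(π) the number of inversions of π and k the number of 2-cycles of π, and L(M_π) is the sum over all strands {i<j} of M_π of (j−i), minus the number of crossing pairs of strands. -/
/-- The number of inversions (Coxeter length) of a permutation of `Fin n`. -/
def invNum {n : ℕ} (w : Equiv.Perm (Fin n)) : ℕ :=
  (Finset.univ.filter fun p : Fin n × Fin n => p.1 < p.2 ∧ w p.2 < w p.1).card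

/-- The number of 2-cycles of an involution. -/
def numTwoCycles {n : ℕ} (π : Equiv.Perm (Fin n)) : ℕ :=
  (Finset.univ.filter fun i : Fin n => π i ≠ i).card / 2

/-- The sum of the lengths `j - i` of the strands `{i < j}` of the matching `M_π`
(each strand recorded at its left endpoint). -/
def strandSum {n : ℕ} (π : Equiv.Perm (Fin n)) : ℕ :=
  ∑ i : Fin n, if i < π i then (π i : ℕ) - (i : ℕ) else 0

/-- The number of crossing pairs of strands of `M_π`: unordered pairs of strands
`{i < j}`, `{k < l}` with `i < k < j < l` (recorded via left endpoints `i < k`). -/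
def numCrossings {n : ℕ} (π : Equiv.Perm (Fin n)) : ℕ :=
  (Finset.univ.filter fun p : Fin n × Fin n =>
    p.1 < π p.1 ∧ p.2 < π p.2 ∧ p.1 < p.2 ∧ p.2 < π p.1 ∧ π p.1 < π p.2).card

open Finset

set_option maxHeartbeats 1600000 in
lemma key_orbit (A B C D : ℕ) (hAB : A = B ↔ C = D) (hBC : B = C ↔ A = D) :
    ((if (A < B ∧ D < C) ∨ (B < A ∧ C < D) then (1:ℤ) else 0)
      + (if (B = C ∧ A < B) ∨ (A = D ∧ B < A) then 1 else 0)
      + 2 * (if (A < C ∧ B < D ∧ A < B ∧ B < C ∧ C < D)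
              ∨ (B < D ∧ A < C ∧ B < A ∧ A < D ∧ D < C) then 1 else 0)
      - 2 * (if (A < B ∧ B ≤ C) ∨ (B < A ∧ A ≤ D) then 1 else 0))
    + ((if (C < D ∧ B < A) ∨ (D < C ∧ A < B) then (1:ℤ) else 0)
      + (if (D = A ∧ C < D) ∨ (C = B ∧ D < C) then 1 else 0)
      + 2 * (if (C < A ∧ D < B ∧ C < D ∧ D < A ∧ A < B)
              ∨ (D < B ∧ C < A ∧ D < C ∧ C < B ∧ B < A) then 1 else 0)
      - 2 * (if (C < D ∧ D ≤ A) ∨ (D < C ∧ C ≤ B) then 1 else 0)) = 0 := by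
  obtain hab | hab | hab := lt_trichotomy A B
  · obtain hcd | hcd | hcd := lt_trichotomy C D
    · simp only [hab, hcd, lt_asymm hab, lt_asymm hcd, true_and, and_true, false_and,
        and_false, false_or, or_false, if_false, if_true]
      split_ifs <;> omega
    · exact absurd (hAB.mpr hcd) (Nat.ne_of_lt hab)
    · simp only [hab, hcd, lt_asymm hab, lt_asymm hcd, true_and, and_true, false_and,
        and_false, false_or, or_false, if_false, if_true]
      split_ifs <;> omega
  · subst hab
    have hcd := hAB.mp rfl
    subst hcd
    simp [lt_irrefl]
  · obtain hcd | hcd | hcd := lt_trichotomy C D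
    · simp only [hab, hcd, lt_asymm hab, lt_asymm hcd, true_and, and_true, false_and,
        and_false, false_or, or_false, if_false, if_true]
      split_ifs <;> omega
    · exact absurd (hAB.mpr hcd) (Nat.ne_of_gt hab)
    · simp only [hab, hcd, lt_asymm hab, lt_asymm hcd, true_and, and_true, false_and,
        and_false, false_or, or_false, if_false, if_true]
      split_ifs <;> omega

lemma doubling {n : ℕ} (q : Fin n × Fin n → Prop) [DecidablePred q]
    (hdis : ∀ p, q p → ¬ q p.swap) :
    (univ.filter fun p : Fin n × Fin n => q p ∨ q p.swap).card
      = 2 * (univ.filter q).card := by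
  have hswap : (univ.filter fun p : Fin n × Fin n => q p.swap).card
      = (univ.filter q).card := by
    apply card_nbij' Prod.swap Prod.swap <;> simp [Set.MapsTo, Set.LeftInvOn, Set.RightInvOn]
  rw [filter_or, card_union_of_disjoint, hswap, two_mul]
  rw [disjoint_left]
  intro p hp hp'
  simp only [mem_filter] at hp hp'
  exact hdis p hp.2 hp'.2

/-- `L(π) = L(M_π)`: with `L(π) = (ℓ(π)+k)/2` and `L(M_π) = strandSum - numCrossings`,
equivalently (clearing the division and the subtraction)
`ℓ(π) + k + 2·(number of crossings) = 2·(sum of strand lengths)`. -/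
theorem stmt2 (n : ℕ) (π : Equiv.Perm (Fin n)) (hπ : π * π = 1) :
    invNum π + numTwoCycles π + 2 * numCrossings π = 2 * strandSum π := by
  have hinv : ∀ i, π (π i) = i := by
    intro i
    have := congrArg (fun σ : Equiv.Perm (Fin n) => σ i) hπ
    simpa using this
  -- the signed weight function on ordered pairs
  set f : Fin n × Fin n → ℤ := fun p =>
    (if (p.1 < p.2 ∧ π p.2 < π p.1) ∨ (p.2 < p.1 ∧ π p.1 < π p.2) then (1:ℤ) else 0)
    + (if (p.2 = π p.1 ∧ p.1 < p.2) ∨ (p.1 = π p.2 ∧ p.2 < p.1) then 1 else 0)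
    + 2 * (if (p.1 < π p.1 ∧ p.2 < π p.2 ∧ p.1 < p.2 ∧ p.2 < π p.1 ∧ π p.1 < π p.2)
            ∨ (p.2 < π p.2 ∧ p.1 < π p.1 ∧ p.2 < p.1 ∧ p.1 < π p.2 ∧ π p.2 < π p.1)
           then 1 else 0)
    - 2 * (if (p.1 < p.2 ∧ p.2 ≤ π p.1) ∨ (p.2 < p.1 ∧ p.1 ≤ π p.2) then 1 else 0)
    with hf
  -- the sum of f over all ordered pairs vanishes
  have hsum : ∑ p : Fin n × Fin n, f p = 0 := by
    apply Finset.sum_ninvolution (fun p => (π p.1, π p.2))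
    · intro p
      have hAB : (p.1 : ℕ) = p.2 ↔ (π p.1 : ℕ) = π p.2 := by
        rw [Fin.val_eq_val, Fin.val_eq_val, Equiv.apply_eq_iff_eq]
      have hBC : (p.2 : ℕ) = π p.1 ↔ (p.1 : ℕ) = π p.2 := by
        rw [Fin.val_eq_val, Fin.val_eq_val]
        constructor
        · intro h; rw [h]; exact (hinv p.1).symm
        · intro h; rw [h]; exact (hinv p.2).symm
      simp only [hf, hinv, Fin.lt_def, Fin.le_def, Fin.ext_iff]
      exact key_orbit _ _ _ _ hAB hBC
    · intro p hp hne
      exfalso; apply hp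
      have h1 : π p.1 = p.1 := congrArg Prod.fst hne
      have h2 : π p.2 = p.2 := congrArg Prod.snd hne
      simp only [hf, h1, h2, Fin.lt_def, Fin.le_def, Fin.ext_iff]
      split_ifs <;> omega
    · intro p; exact mem_univ _
    · intro p; simp [hinv]
  -- decompose the sum into the four cards
  have hsplit : ∑ p : Fin n × Fin n, f p =
      ((univ.filter fun p : Fin n × Fin n =>
          (p.1 < p.2 ∧ π p.2 < π p.1) ∨ (p.2 < p.1 ∧ π p.1 < π p.2)).card : ℤ)
      + ((univ.filter fun p : Fin n × Fin n =>
          (p.2 = π p.1 ∧ p.1 < p.2) ∨ (p.1 = π p.2 ∧ p.2 < p.1)).card : ℤ)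
      + 2 * ((univ.filter fun p : Fin n × Fin n =>
          (p.1 < π p.1 ∧ p.2 < π p.2 ∧ p.1 < p.2 ∧ p.2 < π p.1 ∧ π p.1 < π p.2)
          ∨ (p.2 < π p.2 ∧ p.1 < π p.1 ∧ p.2 < p.1 ∧ p.1 < π p.2 ∧ π p.2 < π p.1)).card : ℤ)
      - 2 * ((univ.filter fun p : Fin n × Fin n =>
          (p.1 < p.2 ∧ p.2 ≤ π p.1) ∨ (p.2 < p.1 ∧ p.1 ≤ π p.2)).card : ℤ) := by
    simp only [hf]
    rw [Finset.sum_sub_distrib, Finset.sum_add_distrib, Finset.sum_add_distrib,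
      ← Finset.mul_sum, ← Finset.mul_sum]
    simp [Finset.sum_boole]
  -- identify each card
  have hI1 : (univ.filter fun p : Fin n × Fin n =>
      (p.1 < p.2 ∧ π p.2 < π p.1) ∨ (p.2 < p.1 ∧ π p.1 < π p.2)).card = 2 * invNum π := by
    rw [invNum]
    exact doubling (fun p => p.1 < p.2 ∧ π p.2 < π p.1)
      (fun p h h' => absurd h'.1 (lt_asymm h.1))
  have hI2 : (univ.filter fun p : Fin n × Fin n =>
      (p.2 = π p.1 ∧ p.1 < p.2) ∨ (p.1 = π p.2 ∧ p.2 < p.1)).card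
      = 2 * (univ.filter fun i : Fin n => i < π i).card := by
    refine Eq.trans (doubling (fun p => p.2 = π p.1 ∧ p.1 < p.2)
      (fun p h h' => absurd h'.2 (lt_asymm h.2))) ?_
    congr 1
    apply card_nbij' (fun p => p.1) (fun i => (i, π i))
    · intro p hp
      simp only [mem_coe, mem_filter, mem_univ, true_and] at hp ⊢
      rw [← hp.1]; exact hp.2
    · intro i hi
      simp only [mem_coe, mem_filter, mem_univ, true_and] at hi
      simp [hi]
    · intro p hp
      simp only [mem_coe, mem_filter, mem_univ, true_and] at hp
      exact Prod.ext rfl hp.1.symm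
    · intro i _; rfl
  have hI3 : (univ.filter fun p : Fin n × Fin n =>
      (p.1 < π p.1 ∧ p.2 < π p.2 ∧ p.1 < p.2 ∧ p.2 < π p.1 ∧ π p.1 < π p.2)
      ∨ (p.2 < π p.2 ∧ p.1 < π p.1 ∧ p.2 < p.1 ∧ p.1 < π p.2 ∧ π p.2 < π p.1)).card
      = 2 * numCrossings π := by
    rw [numCrossings]
    exact doubling
      (fun p => p.1 < π p.1 ∧ p.2 < π p.2 ∧ p.1 < p.2 ∧ p.2 < π p.1 ∧ π p.1 < π p.2)
      (fun p h h' => absurd h'.2.2.1 (lt_asymm h.2.2.1))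
  have hI4 : (univ.filter fun p : Fin n × Fin n =>
      (p.1 < p.2 ∧ p.2 ≤ π p.1) ∨ (p.2 < p.1 ∧ p.1 ≤ π p.2)).card
      = 2 * strandSum π := by
    refine Eq.trans (doubling (fun p => p.1 < p.2 ∧ p.2 ≤ π p.1)
      (fun p h h' => absurd h'.1 (lt_asymm h.1))) ?_
    congr 1
    rw [strandSum]
    rw [Finset.card_eq_sum_card_fiberwise
      (f := fun p : Fin n × Fin n => p.1) (t := univ) (fun _ _ => mem_univ _)]
    apply Finset.sum_congr rfl
    intro i _
    have hcard : ((univ.filter fun p : Fin n × Fin n => p.1 < p.2 ∧ p.2 ≤ π p.1).filter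
        fun p => p.1 = i).card = (Finset.Ioc i (π i)).card := by
      apply card_nbij' (fun p => p.2) (fun j => (i, j))
      · intro p hp
        simp only [mem_coe, mem_filter, mem_univ, true_and, mem_Ioc] at hp ⊢
        obtain ⟨⟨h1, h2⟩, h3⟩ := hp
        exact ⟨h3 ▸ h1, h3 ▸ h2⟩
      · intro j hj
        simp only [mem_coe, mem_Ioc] at hj
        simp [hj.1, hj.2]
      · intro p hp
        simp only [mem_coe, mem_filter, mem_univ, true_and] at hp
        exact Prod.ext hp.2.symm rfl
      · intro j _; rfl
    rw [hcard, Fin.card_Ioc]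
    split_ifs with h
    · rfl
    · rw [not_lt, Fin.le_def] at h
      omega
  have hk : numTwoCycles π = (univ.filter fun i : Fin n => i < π i).card := by
    rw [numTwoCycles]
    have hsp : (univ.filter fun i : Fin n => π i ≠ i).card
        = (univ.filter fun i : Fin n => i < π i).card
          + (univ.filter fun i : Fin n => π i < i).card := by
      rw [← card_union_of_disjoint, ← filter_or]
      · apply congrArg
        apply Finset.filter_congr
        intro i _
        exact ne_comm.trans ne_iff_lt_or_gt
      · rw [disjoint_left]
        intro a ha ha'
        simp only [mem_filter] at ha ha'
        exact absurd ha'.2 (lt_asymm ha.2)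
    have hbij : (univ.filter fun i : Fin n => π i < i).card
        = (univ.filter fun i : Fin n => i < π i).card := by
      apply card_nbij' (fun i => π i) (fun i => π i)
      · intro a ha
        simp only [mem_coe, mem_filter, mem_univ, true_and] at ha ⊢
        rw [hinv]; exact ha
      · intro a ha
        simp only [mem_coe, mem_filter, mem_univ, true_and] at ha ⊢
        rw [hinv]; exact ha
      · intro a _; exact hinv a
      · intro a _; exact hinv a
    rw [hsp, hbij]
    omega
  rw [hsplit, hI1, hI2, hI3, hI4] at hsum
  rw [hk]
  omega
end

section
/- For any involution π of S_n and any simple transposition s_i, if ℓ(s_i π s_i) = ℓ(π) + 2, then s_i π s_i is an involution with the same number of 2-cycles as π and L(s_i π s_i) = L(π) + 1, where L(σ) = (ℓ(σ)+k(σ))/2 and k(σ) is the number of 2-cycles of the involution σ. -/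
/-- The simple transposition `s_i = (i, i+1)` (0-indexed) in `S_n`, or `1` if out of range. -/
def sNat (n i : ℕ) : Equiv.Perm (Fin n) :=
  if h : i + 1 < n then Equiv.swap ⟨i, Nat.lt_of_succ_lt h⟩ ⟨i + 1, h⟩ else 1

lemma sNat_mul_self (n i : ℕ) : sNat n i * sNat n i = 1 := by
  unfold sNat
  split
  · exact Equiv.swap_mul_self _ _
  · simp

lemma numTwoCycles_conj {n : ℕ} (σ π : Equiv.Perm (Fin n)) (hσ : σ * σ = 1) :
    numTwoCycles (σ * π * σ) = numTwoCycles π := by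
  have hσσ : ∀ x, σ (σ x) = x := fun x => by
    have := congrArg (fun τ => τ x) hσ
    simpa [Equiv.Perm.mul_apply] using this
  unfold numTwoCycles
  congr 1
  have key : (Finset.univ.filter fun i : Fin n => (σ * π * σ) i ≠ i) =
      (Finset.univ.filter fun i : Fin n => π i ≠ i).map σ.toEmbedding := by
    ext j
    rw [Finset.mem_filter, Finset.mem_map]
    simp only [Finset.mem_filter, Finset.mem_map, Finset.mem_univ, true_and,
      Equiv.coe_toEmbedding, Equiv.Perm.mul_apply]
    constructor
    · intro hj
      exact ⟨σ j, fun heq => hj (by rw [heq, hσσ]), hσσ j⟩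
    · rintro ⟨k, hk, rfl⟩
      rw [hσσ]
      exact fun heq => hk (σ.injective heq)
  rw [key, Finset.card_map]

/-- If `π` is an involution of `S_n` and `ℓ(s_i π s_i) = ℓ(π) + 2`, then `s_i π s_i` is an
involution with the same number of 2-cycles as `π`, and `L(s_i π s_i) = L(π) + 1`, where
`L(σ) = (ℓ(σ) + k(σ))/2`. -/
theorem stmt3 (n i : ℕ) (hi : i + 1 < n) (π : Equiv.Perm (Fin n)) (hπ : π * π = 1)
    (h : invNum (sNat n i * π * sNat n i) = invNum π + 2) :
    (sNat n i * π * sNat n i) * (sNat n i * π * sNat n i) = 1 ∧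
    numTwoCycles (sNat n i * π * sNat n i) = numTwoCycles π ∧
    (invNum (sNat n i * π * sNat n i) + numTwoCycles (sNat n i * π * sNat n i)) / 2 =
      (invNum π + numTwoCycles π) / 2 + 1 := by
  have hs := sNat_mul_self n i
  refine ⟨?_, numTwoCycles_conj _ _ hs, ?_⟩
  · calc (sNat n i * π * sNat n i) * (sNat n i * π * sNat n i)
        = sNat n i * π * (sNat n i * sNat n i) * π * sNat n i := by group
      _ = 1 := by rw [hs, mul_one, mul_assoc (sNat n i) π π, hπ, mul_one, hs]
  · rw [numTwoCycles_conj _ _ hs, h]; omega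
end

section
/- With the Richardson–Springer action m(s_i)·π (defined by: s_i π s_i if ℓ(s_i π s_i)=ℓ(π)+2; s_i π if π fixes both i and i+1; π otherwise), for every involution π of S_n and every i, m(s_i)·π is again an involution and L(m(s_i)·π) ∈ {L(π), L(π)+1}, where L(σ) = (ℓ(σ) + number of 2-cycles of σ)/2. -/
/-- The Richardson–Springer monoid action of `m(s_i)` on involutions:
`s_i π s_i` if `ℓ(s_i π s_i) = ℓ(π) + 2`; `s_i π` if `π` fixes both `i` and `i+1`;
and `π` otherwise. -/
def RS (n i : ℕ) (π : Equiv.Perm (Fin n)) : Equiv.Perm (Fin n) :=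
  if invNum (sNat n i * π * sNat n i) = invNum π + 2 then sNat n i * π * sNat n i
  else if ∀ x : Fin n, ((x : ℕ) = i ∨ (x : ℕ) = i + 1) → π x = x then sNat n i * π
  else π

lemma swap_lt_iff {n : ℕ} (a b x y : Fin n) (hab : (a:ℕ)+1 = b) :
    Equiv.swap a b y < Equiv.swap a b x ↔ (y < x ∧ ¬(y = a ∧ x = b)) ∨ (y = b ∧ x = a) := by
  simp only [Equiv.swap_apply_def, Fin.lt_def, Fin.ext_iff]
  split_ifs <;> simp_all [Fin.ext_iff] <;> omega

lemma invNum_swap_mul {n : ℕ} (a b : Fin n) (hab : (a:ℕ)+1 = b) (π : Equiv.Perm (Fin n))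
    (ha : π a = a) (hb : π b = b) :
    invNum (Equiv.swap a b * π) = invNum π + 1 := by
  have hab' : a < b := by rw [Fin.lt_def]; omega
  unfold invNum
  have hset : (Finset.univ.filter fun p : Fin n × Fin n =>
        p.1 < p.2 ∧ (Equiv.swap a b * π) p.2 < (Equiv.swap a b * π) p.1)
      = insert (a, b) (Finset.univ.filter fun p : Fin n × Fin n => p.1 < p.2 ∧ π p.2 < π p.1) := by
    ext ⟨p, q⟩
    simp only [Finset.mem_filter, Finset.mem_univ, true_and, Finset.mem_insert,
      Equiv.Perm.mul_apply, swap_lt_iff _ _ _ _ hab, Prod.mk.injEq]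
    constructor
    · rintro ⟨hpq, (⟨hlt, -⟩ | ⟨hq, hp⟩)⟩
      · exact Or.inr ⟨hpq, hlt⟩
      · exact Or.inl ⟨π.injective (hp.trans ha.symm), π.injective (hq.trans hb.symm)⟩
    · rintro (⟨rfl, rfl⟩ | ⟨hpq, hlt⟩)
      · exact ⟨hab', Or.inr ⟨hb, ha⟩⟩
      · refine ⟨hpq, Or.inl ⟨hlt, ?_⟩⟩
        rintro ⟨hq, hp⟩
        rw [π.injective (hq.trans ha.symm), π.injective (hp.trans hb.symm)] at hpq
        exact absurd hpq (not_lt.2 hab'.le)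
  rw [hset, Finset.card_insert_of_notMem]
  simp only [Finset.mem_filter, Finset.mem_univ, true_and, not_and, ha, hb]
  exact fun _ => not_lt.2 hab'.le

lemma numTwoCycles_eq {n : ℕ} (π : Equiv.Perm (Fin n)) :
    numTwoCycles π = π.support.card / 2 := rfl

lemma conj_fix_eq {n : ℕ} (a b : Fin n) (π : Equiv.Perm (Fin n))
    (ha : π a = a) (hb : π b = b) :
    Equiv.swap a b * π * Equiv.swap a b = π := by
  ext x
  simp only [Equiv.Perm.mul_apply]
  rcases eq_or_ne x a with rfl | hxa
  · rw [Equiv.swap_apply_left, hb, Equiv.swap_apply_right, ha]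
  rcases eq_or_ne x b with rfl | hxb
  · rw [Equiv.swap_apply_right, ha, Equiv.swap_apply_left, hb]
  · rw [Equiv.swap_apply_of_ne_of_ne hxa hxb,
      Equiv.swap_apply_of_ne_of_ne
        (fun h => hxa (π.injective (h.trans ha.symm)))
        (fun h => hxb (π.injective (h.trans hb.symm)))]

/-- For every involution `π` of `S_n` and every `i`, `m(s_i)·π` is again an involution, and
`L(m(s_i)·π) ∈ {L(π), L(π)+1}`, where `L(σ) = (ℓ(σ) + (number of 2-cycles of σ))/2`. -/
theorem stmt6 (n i : ℕ) (hi : i + 1 < n) (π : Equiv.Perm (Fin n)) (hπ : π * π = 1) :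
    RS n i π * RS n i π = 1 ∧
    ((invNum (RS n i π) + numTwoCycles (RS n i π)) / 2 = (invNum π + numTwoCycles π) / 2 ∨
      (invNum (RS n i π) + numTwoCycles (RS n i π)) / 2 =
        (invNum π + numTwoCycles π) / 2 + 1) := by
  set a : Fin n := ⟨i, Nat.lt_of_succ_lt hi⟩ with ha_def
  set b : Fin n := ⟨i + 1, hi⟩ with hb_def
  have hab : (a : ℕ) + 1 = b := rfl
  have hne : a ≠ b := by simp [ha_def, hb_def, Fin.ext_iff]
  have hs : sNat n i = Equiv.swap a b := by rw [sNat, dif_pos hi]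
  have hss : Equiv.swap a b * Equiv.swap a b = 1 := Equiv.swap_mul_self a b
  unfold RS
  rw [hs]
  split_ifs with h1 h2
  · -- case RS = s π s
    constructor
    · have key : Equiv.swap a b * π * Equiv.swap a b * (Equiv.swap a b * π * Equiv.swap a b)
          = Equiv.swap a b * (π * ((Equiv.swap a b * Equiv.swap a b) * π)) * Equiv.swap a b := by
        group
      rw [key, hss, one_mul, hπ, mul_one, hss]
    · right
      have hsupp : (Equiv.swap a b * π * Equiv.swap a b).support.card = π.support.card := by
        have e : Equiv.swap a b * π * Equiv.swap a b
            = Equiv.swap a b * π * (Equiv.swap a b)⁻¹ := by rw [Equiv.swap_inv]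
        rw [e, Equiv.Perm.support_conj, Finset.card_map]
      rw [numTwoCycles_eq, numTwoCycles_eq π, hsupp, h1]
      omega
  · -- case RS = s π, π fixes a and b
    have ha : π a = a := h2 a (Or.inl rfl)
    have hb : π b = b := h2 b (Or.inr rfl)
    have hconj : Equiv.swap a b * π * Equiv.swap a b = π := conj_fix_eq a b π ha hb
    constructor
    · have hcomm : π * Equiv.swap a b = Equiv.swap a b * π := by
        calc π * Equiv.swap a b
            = (Equiv.swap a b * π * Equiv.swap a b) * Equiv.swap a b := by rw [hconj]
          _ = Equiv.swap a b * π * (Equiv.swap a b * Equiv.swap a b) := by group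
          _ = Equiv.swap a b * π := by rw [hss, mul_one]
      calc Equiv.swap a b * π * (Equiv.swap a b * π)
          = Equiv.swap a b * (π * Equiv.swap a b) * π := by group
        _ = Equiv.swap a b * (Equiv.swap a b * π) * π := by rw [hcomm]
        _ = (Equiv.swap a b * Equiv.swap a b) * (π * π) := by group
        _ = 1 := by rw [hss, hπ, one_mul]
    · right
      have hinv : invNum (Equiv.swap a b * π) = invNum π + 1 :=
        invNum_swap_mul a b hab π ha hb
      have hdisj : (Equiv.swap a b).Disjoint π := by
        intro x
        rcases eq_or_ne x a with rfl | hxa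
        · exact Or.inr ha
        rcases eq_or_ne x b with rfl | hxb
        · exact Or.inr hb
        · exact Or.inl (Equiv.swap_apply_of_ne_of_ne hxa hxb)
      have hsupp : (Equiv.swap a b * π).support.card = π.support.card + 2 := by
        rw [hdisj.card_support_mul, Equiv.Perm.card_support_swap hne]
        omega
      rw [numTwoCycles_eq, numTwoCycles_eq π, hinv, hsupp]
      omega
  · exact ⟨hπ, Or.inl rfl⟩
end

section
/- The identity permutation is the unique minimal element of the weak order on involutions of S_n: for every involution π, there is a sequence id = π_0, π_1, ..., π_m = π of involutions such that each π_{j+1} = m(s_{i_j})·π_j ≠ π_j for some simple transposition s_{i_j}. -/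
/-- The covering relation of the weak order on involutions: `π ⋖ π'` iff
`π' = m(s_i)·π ≠ π` for some `i`. -/
def cov (n : ℕ) (π π' : Equiv.Perm (Fin n)) : Prop :=
  ∃ i : ℕ, RS n i π = π' ∧ π' ≠ π

section Aux

variable {n : ℕ}

lemma invNum_inv (π : Equiv.Perm (Fin n)) : invNum π⁻¹ = invNum π := by
  unfold invNum
  refine Finset.card_nbij' (fun p => (π⁻¹ p.2, π⁻¹ p.1)) (fun p => (π p.2, π p.1)) ?_ ?_ ?_ ?_ <;>
    rintro ⟨a, b⟩ h <;> simp_all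

/-- swapping adjacent `i`, `i+1` preserves strict order except on the pair `(i, i+1)`. -/
lemma swap_adj_lt {i : ℕ} (hi : i + 1 < n) {a b : Fin n} (hab : a < b)
    (hne : ¬(a = (⟨i, Nat.lt_of_succ_lt hi⟩ : Fin n) ∧ b = (⟨i + 1, hi⟩ : Fin n))) :
    Equiv.swap (⟨i, Nat.lt_of_succ_lt hi⟩ : Fin n) ⟨i + 1, hi⟩ a
      < Equiv.swap (⟨i, Nat.lt_of_succ_lt hi⟩ : Fin n) ⟨i + 1, hi⟩ b := by
  have ha := a.isLt
  have hb := b.isLt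
  simp only [Equiv.swap_apply_def]
  rw [Fin.lt_def] at hab
  rw [Fin.ext_iff, Fin.ext_iff] at hne
  split_ifs with h1 h2 h3 h4 <;>
    simp only [Fin.ext_iff, Fin.lt_def] at * <;> omega

/-- Right multiplication by an adjacent descent transposition drops `invNum` by one. -/
lemma invNum_mul_swap {i : ℕ} (hi : i + 1 < n) (π : Equiv.Perm (Fin n))
    (hd : π ⟨i + 1, hi⟩ < π ⟨i, Nat.lt_of_succ_lt hi⟩) :
    invNum (π * Equiv.swap (⟨i, Nat.lt_of_succ_lt hi⟩ : Fin n) ⟨i + 1, hi⟩) + 1 = invNum π := by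
  set I : Fin n := ⟨i, Nat.lt_of_succ_lt hi⟩ with hI
  set I1 : Fin n := ⟨i + 1, hi⟩ with hI1
  set σ := Equiv.swap I I1 with hσ
  have hII1 : I < I1 := by simp [hI, hI1, Fin.lt_def]
  set T := (Finset.univ.filter fun p : Fin n × Fin n => p.1 < p.2 ∧ π p.2 < π p.1) with hT
  have hmemT : (I, I1) ∈ T := by simp [hT, hII1, hd]
  have hcard : invNum (π * σ) = (T.erase (I, I1)).card := by
    unfold invNum
    refine Finset.card_nbij' (fun p => (σ p.1, σ p.2)) (fun p => (σ p.1, σ p.2)) ?_ ?_ ?_ ?_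
    · rintro ⟨a, b⟩ h
      rw [Finset.mem_coe, Finset.mem_filter] at h
      simp only [Finset.mem_filter, Finset.mem_univ, true_and, Equiv.Perm.mul_apply] at h
      obtain ⟨hab, hinv⟩ := h
      have hne : ¬(a = I ∧ b = I1) := by
        rintro ⟨rfl, rfl⟩
        rw [Equiv.swap_apply_left, Equiv.swap_apply_right] at hinv
        exact absurd hd (not_lt.2 hinv.le)
      have hlt := swap_adj_lt hi hab hne
      refine Finset.mem_erase.2 ⟨?_, ?_⟩
      · rintro hpe
        have h1 : σ a = I := congrArg Prod.fst hpe
        have h2 : σ b = I1 := congrArg Prod.snd hpe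
        have : a = I1 := by
          have := congrArg σ h1; simpa [hσ] using this
        have hb : b = I := by
          have := congrArg σ h2; simpa [hσ] using this
        rw [this, hb] at hab
        exact absurd hab (not_lt.2 hII1.le)
      · simp only [hT, Finset.mem_filter, Finset.mem_univ, true_and]
        exact ⟨hlt, hinv⟩
    · rintro ⟨a, b⟩ h
      rw [Finset.mem_coe, Finset.mem_erase] at h
      obtain ⟨hpe, hmem⟩ := h
      simp only [hT, Finset.mem_filter, Finset.mem_univ, true_and] at hmem
      obtain ⟨hab, hinv⟩ := hmem
      have hne : ¬(a = I ∧ b = I1) := by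
        rintro ⟨rfl, rfl⟩; exact hpe rfl
      have hlt := swap_adj_lt hi hab hne
      rw [Finset.mem_coe, Finset.mem_filter]
      simp only [Finset.mem_filter, Finset.mem_univ, true_and, Equiv.Perm.mul_apply]
      refine ⟨hlt, ?_⟩
      simpa [hσ, Equiv.swap_apply_self] using hinv
    · rintro ⟨a, b⟩ _; simp [hσ, Equiv.swap_apply_self]
    · rintro ⟨a, b⟩ _; simp [hσ, Equiv.swap_apply_self]
  have hpos : 0 < T.card := Finset.card_pos.2 ⟨_, hmemT⟩
  have hTcard : invNum π = T.card := rfl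
  rw [hcard, Finset.card_erase_of_mem hmemT, hTcard]
  omega

lemma exists_descent (π : Equiv.Perm (Fin n)) (h1 : π ≠ 1) :
    ∃ i : ℕ, ∃ hi : i + 1 < n, π ⟨i + 1, hi⟩ < π ⟨i, Nat.lt_of_succ_lt hi⟩ := by
  by_contra hc
  push_neg at hc
  have hmono : ∀ d : ℕ, ∀ a b : Fin n, (b : ℕ) = (a : ℕ) + d → π a ≤ π b := by
    intro d
    induction d with
    | zero => intro a b hab; have : a = b := Fin.ext (by omega); rw [this]
    | succ d ih =>
      intro a b hab
      have hcn : (a : ℕ) + d < n := by omega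
      set c : Fin n := ⟨(a : ℕ) + d, hcn⟩ with hc'
      have h1' : π a ≤ π c := ih a c rfl
      have hi : (a : ℕ) + d + 1 < n := by omega
      have h2' : π ⟨(a : ℕ) + d, Nat.lt_of_succ_lt hi⟩ ≤ π ⟨(a : ℕ) + d + 1, hi⟩ :=
        hc ((a : ℕ) + d) hi
      have hb : b = ⟨(a : ℕ) + d + 1, hi⟩ := Fin.ext (by simp only [Fin.val_mk]; omega)
      rw [hb]
      exact h1'.trans h2'
  have hMono : Monotone π := by
    intro a b hab
    exact hmono ((b : ℕ) - (a : ℕ)) a b (by omega)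
  have hsm : StrictMono π := hMono.strictMono_of_injective π.injective
  have hrange : Set.range π = Set.range (id : Fin n → Fin n) := by
    simp [π.surjective.range_eq]
  have hwf : WellFoundedLT (Fin n) := inferInstance
  have hid : ⇑π = id := (StrictMono.range_inj hsm strictMono_id).1 hrange
  exact h1 (Equiv.Perm.ext fun x => congrFun hid x)

lemma involution_apply {π : Equiv.Perm (Fin n)} (hπ : π * π = 1) (x : Fin n) : π (π x) = x := by
  have h : (π * π) x = (1 : Equiv.Perm (Fin n)) x := by rw [hπ]
  simpa using h

end Aux

/-- The identity is the unique minimal element of weak order on involutions: every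
involution `π` is reachable from `id` by a chain of covering relations
`π_{j+1} = m(s_{i_j})·π_j ≠ π_j`. -/
theorem stmt7 (n : ℕ) (π : Equiv.Perm (Fin n)) (hπ : π * π = 1) :
    Relation.ReflTransGen (cov n) 1 π := by
  suffices H : ∀ k (π : Equiv.Perm (Fin n)), π * π = 1 → invNum π = k →
      Relation.ReflTransGen (cov n) 1 π from H (invNum π) π hπ rfl
  intro k
  induction k using Nat.strong_induction_on with
  | _ k ih =>
  intro π hπ hk
  by_cases h1 : π = 1
  · subst h1; exact .refl
  obtain ⟨i, hi, hdesc⟩ := exists_descent π h1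
  have hsNat : sNat n i = Equiv.swap ⟨i, Nat.lt_of_succ_lt hi⟩ ⟨i + 1, hi⟩ := by
    rw [sNat, dif_pos hi]
  generalize hI : (⟨i, Nat.lt_of_succ_lt hi⟩ : Fin n) = I at *
  generalize hI1 : (⟨i + 1, hi⟩ : Fin n) = I1 at *
  generalize hσ' : Equiv.swap I I1 = σ at *
  have hσσ : σ * σ = 1 := by rw [← hσ']; exact Equiv.swap_mul_self I I1
  have hII1 : I ≠ I1 := by rw [← hI, ← hI1]; simp [Fin.ext_iff]
  have hIlt : I < I1 := by rw [← hI, ← hI1]; simp [Fin.lt_def]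
  have hswap : ∀ ρ : Equiv.Perm (Fin n), ρ I1 < ρ I → invNum (ρ * σ) + 1 = invNum ρ := by
    intro ρ hρ
    have h2 := invNum_mul_swap hi ρ (by rw [hI, hI1]; exact hρ)
    rw [hI, hI1] at h2
    rw [← hσ']
    exact h2
  by_cases hfix : π I = I1
  · -- π swaps I and I1
    have hfix' : π I1 = I := by
      have h := involution_apply hπ I; rw [hfix] at h; exact h
    have hcomm : σ * π = π * σ := by
      apply Equiv.ext; intro x
      simp only [Equiv.Perm.mul_apply]
      rcases eq_or_ne x I with rfl | hxI
      · rw [hfix, ← hσ', Equiv.swap_apply_left, hfix', Equiv.swap_apply_right]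
      rcases eq_or_ne x I1 with rfl | hxI1
      · rw [hfix', ← hσ', Equiv.swap_apply_right, hfix, Equiv.swap_apply_left]
      · have hπxI : π x ≠ I := fun h => hxI1 (by
          have h2 := congrArg π h; rwa [involution_apply hπ, hfix] at h2)
        have hπxI1 : π x ≠ I1 := fun h => hxI (by
          have h2 := congrArg π h; rwa [involution_apply hπ, hfix'] at h2)
        rw [← hσ', Equiv.swap_apply_of_ne_of_ne hπxI hπxI1,
          Equiv.swap_apply_of_ne_of_ne hxI hxI1]
    have hπ₀inv : (σ * π) * (σ * π) = 1 := by
      calc σ * π * (σ * π) = σ * (π * σ) * π := by group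
      _ = σ * (σ * π) * π := by rw [← hcomm]
      _ = (σ * σ) * (π * π) := by group
      _ = 1 := by rw [hσσ, hπ, one_mul]
    have hlen : invNum (σ * π) + 1 = invNum π := by
      rw [hcomm]; exact hswap π hdesc
    have hchain : Relation.ReflTransGen (cov n) 1 (σ * π) :=
      ih (invNum (σ * π)) (by omega) (σ * π) hπ₀inv rfl
    refine hchain.tail ⟨i, ?_, ?_⟩
    · have hconj : sNat n i * (σ * π) * sNat n i = σ * π := by
        rw [hsNat]
        calc σ * (σ * π) * σ = (σ * σ) * (π * σ) := by group
        _ = π * σ := by rw [hσσ, one_mul]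
        _ = σ * π := hcomm.symm
      rw [RS, hconj, if_neg (by omega)]
      have hfix0 : ∀ x : Fin n, ((x : ℕ) = i ∨ (x : ℕ) = i + 1) → (σ * π) x = x := by
        rintro x (hx | hx)
        · have hxe : x = I := by rw [← hI]; exact Fin.ext hx
          rw [hxe, Equiv.Perm.mul_apply, hfix, ← hσ', Equiv.swap_apply_right]
        · have hxe : x = I1 := by rw [← hI1]; exact Fin.ext hx
          rw [hxe, Equiv.Perm.mul_apply, hfix', ← hσ', Equiv.swap_apply_left]
      rw [if_pos hfix0, hsNat]
      calc σ * (σ * π) = (σ * σ) * π := by group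
      _ = π := by rw [hσσ, one_mul]
    · intro h
      have he := congrArg (fun ρ : Equiv.Perm (Fin n) => ρ I) h
      simp only [Equiv.Perm.mul_apply] at he
      rw [hfix, ← hσ', Equiv.swap_apply_right] at he
      exact hII1 he.symm
  · -- π I ≠ I1
    have hfix' : π I1 ≠ I := fun h => hfix (by
      have h2 := congrArg π h; rw [involution_apply hπ] at h2; exact h2.symm)
    have hπ₀inv : (σ * π * σ) * (σ * π * σ) = 1 := by
      calc σ * π * σ * (σ * π * σ) = σ * π * (σ * σ) * π * σ := by group
      _ = σ * (π * π) * σ := by rw [hσσ]; group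
      _ = σ * σ := by rw [hπ]; group
      _ = 1 := hσσ
    have hd2 : (σ * π) I1 < (σ * π) I := by
      simp only [Equiv.Perm.mul_apply]
      rcases eq_or_ne (π I) I with hu | hu
      · have hv : π I1 < I := hu ▸ hdesc
        have hvI1 : π I1 ≠ I1 := fun h => by
          rw [h] at hv; exact absurd hv (not_lt.2 hIlt.le)
        rw [hu, ← hσ', Equiv.swap_apply_left, Equiv.swap_apply_of_ne_of_ne hfix' hvI1]
        exact hv.trans hIlt
      · have huu : σ (π I) = π I := by
          rw [← hσ']; exact Equiv.swap_apply_of_ne_of_ne hu hfix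
        rcases eq_or_ne (π I1) I1 with hv | hv
        · rw [hv, huu, ← hσ', Equiv.swap_apply_right]
          calc I < I1 := hIlt
          _ = π I1 := hv.symm
          _ < π I := hdesc
        · have hvv : σ (π I1) = π I1 := by
            rw [← hσ']; exact Equiv.swap_apply_of_ne_of_ne hfix' hv
          rw [huu, hvv]; exact hdesc
    have hlen1 : invNum (π * σ) + 1 = invNum π := hswap π hdesc
    have hlen2 : invNum (σ * π * σ) + 1 = invNum (σ * π) := hswap (σ * π) hd2
    have hlen3 : invNum (σ * π) = invNum (π * σ) := by
      have hinv : (π * σ)⁻¹ = σ * π := by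
        rw [mul_inv_rev]
        congr 1
        · rw [← hσ', Equiv.swap_inv, hσ']
        · rw [← one_mul π⁻¹, ← hπ]; group
      rw [← hinv, invNum_inv]
    have hlen : invNum (σ * π * σ) + 2 = invNum π := by omega
    have hchain : Relation.ReflTransGen (cov n) 1 (σ * π * σ) :=
      ih (invNum (σ * π * σ)) (by omega) (σ * π * σ) hπ₀inv rfl
    refine hchain.tail ⟨i, ?_, ?_⟩
    · have hconj : sNat n i * (σ * π * σ) * sNat n i = π := by
        rw [hsNat]
        calc σ * (σ * π * σ) * σ = (σ * σ) * π * (σ * σ) := by group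
        _ = π := by rw [hσσ]; group
      rw [RS, hconj, if_pos (by omega)]
    · intro h
      rw [← h] at hlen
      omega
end

section
/- For a fixed-point free involution π' = (a_1,b_1)...(a_k,b_k) of S_{2k} in standard form, the number of inversions of the word (a_1,b_1,a_2,b_2,...,a_k,b_k) equals L(π') − k, where L(π') = (ℓ(π')+k)/2. -/
/-- The Richardson–Springer monoid action of `m(s_i)` on fixed-point free involutions:
`s_i π s_i` if `ℓ(s_i π s_i) = ℓ(π) + 2`, and `π` otherwise. -/
def RSfpf (n i : ℕ) (π : Equiv.Perm (Fin n)) : Equiv.Perm (Fin n) :=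
  if invNum (sNat n i * π * sNat n i) = invNum π + 2 then sNat n i * π * sNat n i
  else π

/-- The word `(a_1, b_1, a_2, b_2, …, a_k, b_k)` of a fixed-point free involution in
standard form, as a function `Fin (2k) → Fin (2k)`. -/
def word (k : ℕ) (a b : Fin k → Fin (2 * k)) (j : Fin (2 * k)) : Fin (2 * k) :=
  if (j : ℕ) % 2 = 0 then a ⟨(j : ℕ) / 2, by have := j.2; omega⟩
  else b ⟨(j : ℕ) / 2, by have := j.2; omega⟩

/-- The number of inversions of the word `(a_1, b_1, …, a_k, b_k)`. -/
def invWord (k : ℕ) (a b : Fin k → Fin (2 * k)) : ℕ :=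
  (Finset.univ.filter fun p : Fin (2 * k) × Fin (2 * k) =>
    p.1 < p.2 ∧ word k a b p.2 < word k a b p.1).card

/-- Flip the last bit of a position: `2i ↔ 2i+1`. -/
def flipP {k : ℕ} (p : Fin (2 * k)) : Fin (2 * k) :=
  ⟨if (p : ℕ) % 2 = 0 then (p : ℕ) + 1 else (p : ℕ) - 1, by have := p.2; split <;> omega⟩

lemma flipP_val {k : ℕ} (p : Fin (2 * k)) :
    (flipP p : ℕ) = if (p : ℕ) % 2 = 0 then (p : ℕ) + 1 else (p : ℕ) - 1 := rfl

lemma flipP_div {k : ℕ} (p : Fin (2 * k)) : (flipP p : ℕ) / 2 = (p : ℕ) / 2 := by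
  rw [flipP_val]; split <;> omega

lemma flipP_flipP {k : ℕ} (p : Fin (2 * k)) : flipP (flipP p) = p := by
  apply Fin.ext
  rw [flipP_val, flipP_val]
  by_cases h : (p : ℕ) % 2 = 0
  · rw [if_pos h, if_neg (by omega)]; omega
  · have hp : 0 < (p : ℕ) := by by_contra h'; exact h (by omega)
    rw [if_neg h, if_pos (by omega)]; omega

lemma flipP_inj {k : ℕ} : Function.Injective (flipP (k := k)) := by
  intro p q h
  rw [← flipP_flipP p, h, flipP_flipP]

/-- For a fixed-point free involution `π' = (a_1,b_1)⋯(a_k,b_k)` of `S_{2k}` in standard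
form (so `a i < b i`, `a` strictly increasing, `π'(a i) = b i`), the number of inversions of
the word `(a_1,b_1,…,a_k,b_k)` equals `L(π') − k`, where `L(π') = (ℓ(π') + k)/2`. -/
theorem stmt11 (k : ℕ) (π : Equiv.Perm (Fin (2 * k))) (a b : Fin k → Fin (2 * k))
    (hπ : π * π = 1) (hfpf : ∀ x, π x ≠ x) (hab : ∀ i, a i < b i)
    (hmono : StrictMono a) (hpair : ∀ i, π (a i) = b i) :
    invWord k a b = (invNum π + k) / 2 - k := by
  have hπ2 : ∀ x, π (π x) = x := by
    intro x
    have : (π * π) x = (1 : Equiv.Perm (Fin (2 * k))) x := by rw [hπ]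
    simpa using this
  have hbp : ∀ i, π (b i) = a i := fun i => by rw [← hpair, hπ2]
  have hainj : Function.Injective a := hmono.injective
  have hbinj : Function.Injective b := by
    intro i j h
    apply hainj
    have := congrArg π h
    rwa [hbp, hbp] at this
  have hanb : ∀ i j, a i ≠ b j := by
    intro i j h
    have h2 : b i = a j := by
      have := congrArg π h
      rwa [hpair, hbp] at this
    have h3 : a i < b i := hab i
    have h4 : a j < b j := hab j
    rw [h2] at h3
    rw [← h] at h4
    exact absurd (h3.trans h4) (lt_irrefl _)
  -- evaluation lemmas for `word`
  have hwa : ∀ (p : Fin (2 * k)) (i : Fin k), (p : ℕ) = 2 * (i : ℕ) →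
      word k a b p = a i := by
    intro p i h
    rw [word, if_pos (by omega)]
    congr 1
    exact Fin.ext (by show _ / 2 = (i : ℕ); omega)
  have hwb : ∀ (p : Fin (2 * k)) (i : Fin k), (p : ℕ) = 2 * (i : ℕ) + 1 →
      word k a b p = b i := by
    intro p i h
    rw [word, if_neg (by omega)]
    congr 1
    exact Fin.ext (by show _ / 2 = (i : ℕ); omega)
  -- word is injective
  have winj : Function.Injective (word k a b) := by
    intro p q h
    have hp2 := p.2; have hq2 := q.2
    by_cases hp : (p : ℕ) % 2 = 0 <;> by_cases hq : (q : ℕ) % 2 = 0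
    · rw [hwa p ⟨(p : ℕ) / 2, by omega⟩ (by simp only [Fin.val_mk]; omega),
        hwa q ⟨(q : ℕ) / 2, by omega⟩ (by simp only [Fin.val_mk]; omega)] at h
      have := hainj h
      apply Fin.ext
      have : (p : ℕ) / 2 = (q : ℕ) / 2 := congrArg Fin.val this
      omega
    · rw [hwa p ⟨(p : ℕ) / 2, by omega⟩ (by simp only [Fin.val_mk]; omega),
        hwb q ⟨(q : ℕ) / 2, by omega⟩ (by simp only [Fin.val_mk]; omega)] at h
      exact absurd h (hanb _ _)
    · rw [hwb p ⟨(p : ℕ) / 2, by omega⟩ (by simp only [Fin.val_mk]; omega),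
        hwa q ⟨(q : ℕ) / 2, by omega⟩ (by simp only [Fin.val_mk]; omega)] at h
      exact absurd h.symm (hanb _ _)
    · rw [hwb p ⟨(p : ℕ) / 2, by omega⟩ (by simp only [Fin.val_mk]; omega),
        hwb q ⟨(q : ℕ) / 2, by omega⟩ (by simp only [Fin.val_mk]; omega)] at h
      have := hbinj h
      apply Fin.ext
      have : (p : ℕ) / 2 = (q : ℕ) / 2 := congrArg Fin.val this
      omega
  -- π applied to the word is the flipped word
  have hwflip : ∀ p : Fin (2 * k), π (word k a b p) = word k a b (flipP p) := by
    intro p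
    have hp2 := p.2
    by_cases hp : (p : ℕ) % 2 = 0
    · rw [hwa p ⟨(p : ℕ) / 2, by omega⟩ (by simp only [Fin.val_mk]; omega), hpair,
        hwb (flipP p) ⟨(p : ℕ) / 2, by omega⟩ (by rw [flipP_val, if_pos hp]; simp only [Fin.val_mk]; omega)]
    · rw [hwb p ⟨(p : ℕ) / 2, by omega⟩ (by simp only [Fin.val_mk]; omega), hbp,
        hwa (flipP p) ⟨(p : ℕ) / 2, by omega⟩ (by rw [flipP_val, if_neg hp]; simp only [Fin.val_mk]; omega)]
  -- the order star lemma
  have hstar : ∀ p q : Fin (2 * k), (p : ℕ) % 2 = 0 → (p : ℕ) / 2 ≤ (q : ℕ) / 2 →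
      p ≠ q → word k a b p < word k a b q := by
    intro p q hp hle hne
    have hp2 := p.2; have hq2 := q.2
    have hvne : (p : ℕ) ≠ (q : ℕ) := fun h => hne (Fin.ext h)
    rw [hwa p ⟨(p : ℕ) / 2, by omega⟩ (by simp only [Fin.val_mk]; omega)]
    by_cases hq : (q : ℕ) % 2 = 0
    · rw [hwa q ⟨(q : ℕ) / 2, by omega⟩ (by simp only [Fin.val_mk]; omega)]
      exact hmono (by rw [Fin.mk_lt_mk]; omega)
    · rw [hwb q ⟨(q : ℕ) / 2, by omega⟩ (by simp only [Fin.val_mk]; omega)]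
      exact lt_of_le_of_lt (hmono.monotone (by rw [Fin.mk_le_mk]; omega)) (hab _)
  -- shape of word-inversions
  have hBshape : ∀ p q : Fin (2 * k), p < q → word k a b q < word k a b p →
      (p : ℕ) % 2 = 1 ∧ (p : ℕ) / 2 < (q : ℕ) / 2 := by
    intro p q hpq hw
    have hv : (p : ℕ) < (q : ℕ) := hpq
    have hpodd : (p : ℕ) % 2 = 1 := by
      rcases eq_or_ne ((p : ℕ) % 2) 0 with h | h
      · exact absurd (hstar p q h (by omega) (Fin.ne_of_lt hpq)) (not_lt.2 hw.le)
      · omega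
    exact ⟨hpodd, by omega⟩
  have hBA : ∀ p q : Fin (2 * k), p < q → word k a b q < word k a b p →
      word k a b (flipP p) < word k a b (flipP q) := by
    intro p q hpq hw
    obtain ⟨hpodd, hdiv⟩ := hBshape p q hpq hw
    apply hstar
    · rw [flipP_val, if_neg (by omega)]; omega
    · rw [flipP_div, flipP_div]; omega
    · intro h
      have := flipP_inj h
      rw [this] at hpq
      exact lt_irrefl _ hpq
  -- the transported inversion set of π
  set A : Finset (Fin (2 * k) × Fin (2 * k)) :=
    Finset.univ.filter (fun pq : Fin (2 * k) × Fin (2 * k) =>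
      word k a b pq.1 < word k a b pq.2 ∧
      word k a b (flipP pq.2) < word k a b (flipP pq.1)) with hAdef
  set B : Finset (Fin (2 * k) × Fin (2 * k)) :=
    Finset.univ.filter (fun pq : Fin (2 * k) × Fin (2 * k) =>
      pq.1 < pq.2 ∧ word k a b pq.2 < word k a b pq.1) with hBdef
  have hBcard : invWord k a b = B.card := rfl
  -- invNum π = A.card
  have hAcard : invNum π = A.card := by
    have hbij : Function.Bijective (word k a b) :=
      (Finite.injective_iff_bijective).mp winj
    set E : Fin (2 * k) ≃ Fin (2 * k) := Equiv.ofBijective _ hbij with hE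
    have hEapp : ∀ p, E p = word k a b p := fun p => rfl
    rw [invNum]
    symm
    apply Finset.card_equiv (Equiv.prodCongr E E)
    intro ⟨p, q⟩
    simp only [hAdef, Finset.mem_filter, Finset.mem_univ, true_and, Equiv.prodCongr_apply,
      Prod.map, hEapp]
    rw [← hwflip, ← hwflip]
  -- the three pieces
  set F : Finset (Fin (2 * k) × Fin (2 * k)) :=
    Finset.univ.image (fun i : Fin k =>
      ((⟨2 * (i : ℕ), by have := i.2; omega⟩ : Fin (2 * k)),
       (⟨2 * (i : ℕ) + 1, by have := i.2; omega⟩ : Fin (2 * k)))) with hFdef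
  have hsplit : A = (F ∪ B.image (fun pq => (flipP pq.1, flipP pq.2))) ∪
      B.image (fun pq => (pq.2, pq.1)) := by
    ext ⟨x, y⟩
    simp only [hAdef, hBdef, hFdef, Finset.mem_union, Finset.mem_filter, Finset.mem_image,
      Finset.mem_univ, true_and, Prod.mk.injEq]
    constructor
    · rintro ⟨h1, h2⟩
      have hx2 := x.2; have hy2 := y.2
      rcases Nat.lt_trichotomy ((x : ℕ) / 2) ((y : ℕ) / 2) with hlt | heq | hgt
      · refine Or.inl (Or.inr ⟨(flipP x, flipP y), ⟨?_, ?_⟩, ?_, ?_⟩)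
        · show flipP x < flipP y
          have h1 : (flipP x : ℕ) / 2 < (flipP y : ℕ) / 2 := by
            rw [flipP_div, flipP_div]; exact hlt
          show (flipP x : ℕ) < (flipP y : ℕ)
          omega
        · exact h2
        · exact flipP_flipP x
        · exact flipP_flipP y
      · -- same orbit: it is a diagonal pair
        have hne : x ≠ y := fun h => by rw [h] at h1; exact lt_irrefl _ h1
        have hvne : (x : ℕ) ≠ (y : ℕ) := fun h => hne (Fin.ext h)
        have hxe : (x : ℕ) % 2 = 0 := by
          by_contra hxo
          have hye : (y : ℕ) % 2 = 0 := by omega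
          have : word k a b y < word k a b x := by
            rw [hwa y ⟨(y : ℕ) / 2, by omega⟩ (by simp only [Fin.val_mk]; omega),
              hwb x ⟨(x : ℕ) / 2, by omega⟩ (by simp only [Fin.val_mk]; omega)]
            have : ((⟨(y : ℕ) / 2, by omega⟩ : Fin k)) = (⟨(x : ℕ) / 2, by omega⟩ : Fin k) :=
              Fin.ext (by simp [heq])
            rw [this]
            exact hab _
          exact absurd h1 (not_lt.2 this.le)
        refine Or.inl (Or.inl ⟨⟨(x : ℕ) / 2, by omega⟩, ?_, ?_⟩)
        · exact Fin.ext (by simp; omega)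
        · exact Fin.ext (by simp; omega)
      · refine Or.inr ⟨(y, x), ⟨?_, h1⟩, rfl, rfl⟩
        show (y : ℕ) < (x : ℕ)
        omega
    · rintro ((⟨i, hi1, hi2⟩ | ⟨⟨p, q⟩, ⟨hpq, hw⟩, hfx, hfy⟩) | ⟨⟨p, q⟩, ⟨hpq, hw⟩, hfx, hfy⟩)
      · subst hi1; subst hi2
        have hi2 := i.2
        constructor
        · rw [hwa _ i rfl, hwb _ i rfl]
          exact hab i
        · have e1 : flipP (⟨2 * (i : ℕ), by omega⟩ : Fin (2 * k)) =
              ⟨2 * (i : ℕ) + 1, by omega⟩ := Fin.ext (by rw [flipP_val]; simp only [Fin.val_mk]; split <;> omega)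
          have e2 : flipP (⟨2 * (i : ℕ) + 1, by omega⟩ : Fin (2 * k)) =
              ⟨2 * (i : ℕ), by omega⟩ := Fin.ext (by rw [flipP_val]; simp only [Fin.val_mk]; split <;> omega)
          rw [e1, e2, hwa _ i rfl, hwb _ i rfl]
          exact hab i
      · subst hfx; subst hfy
        exact ⟨hBA p q hpq hw, by rw [flipP_flipP, flipP_flipP]; exact hw⟩
      · subst hfx; subst hfy
        exact ⟨hw, hBA p q hpq hw⟩
  -- disjointness
  have hFshape : ∀ z ∈ F, (z.1 : ℕ) / 2 = (z.2 : ℕ) / 2 := by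
    intro z hz
    rw [hFdef] at hz
    simp only [Finset.mem_image, Finset.mem_univ, true_and] at hz
    obtain ⟨i, hi⟩ := hz
    rw [← hi]
    simp; omega
  have hfshape : ∀ z ∈ B.image (fun pq : Fin (2 * k) × Fin (2 * k) => (flipP pq.1, flipP pq.2)),
      (z.1 : ℕ) / 2 < (z.2 : ℕ) / 2 := by
    intro z hz
    simp only [Finset.mem_image, hBdef, Finset.mem_filter, Finset.mem_univ, true_and] at hz
    obtain ⟨⟨p, q⟩, ⟨hpq, hw⟩, hi⟩ := hz
    obtain ⟨_, hdiv⟩ := hBshape p q hpq hw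
    rw [← hi]
    simpa only [flipP_div] using hdiv
  have hgshape : ∀ z ∈ B.image (fun pq : Fin (2 * k) × Fin (2 * k) => (pq.2, pq.1)),
      (z.2 : ℕ) / 2 < (z.1 : ℕ) / 2 := by
    intro z hz
    simp only [Finset.mem_image, hBdef, Finset.mem_filter, Finset.mem_univ, true_and] at hz
    obtain ⟨⟨p, q⟩, ⟨hpq, hw⟩, hi⟩ := hz
    obtain ⟨_, hdiv⟩ := hBshape p q hpq hw
    rw [← hi]
    exact hdiv
  have hd1 : Disjoint F (B.image (fun pq : Fin (2 * k) × Fin (2 * k) => (flipP pq.1, flipP pq.2))) := by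
    rw [Finset.disjoint_left]
    intro z hz hz'
    have := hFshape z hz
    have := hfshape z hz'
    omega
  have hd2 : Disjoint (F ∪ B.image (fun pq : Fin (2 * k) × Fin (2 * k) => (flipP pq.1, flipP pq.2)))
      (B.image (fun pq : Fin (2 * k) × Fin (2 * k) => (pq.2, pq.1))) := by
    rw [Finset.disjoint_left]
    intro z hz hz'
    have hg := hgshape z hz'
    rcases Finset.mem_union.mp hz with h | h
    · have := hFshape z h; omega
    · have := hfshape z h; omega
  -- cardinalities
  have hFcard : F.card = k := by
    rw [hFdef, Finset.card_image_of_injective _ ?_, Finset.card_univ, Fintype.card_fin]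
    intro i j h
    simp only [Prod.mk.injEq, Fin.mk.injEq] at h
    exact Fin.ext (by omega)
  have hfcard : (B.image (fun pq : Fin (2 * k) × Fin (2 * k) => (flipP pq.1, flipP pq.2))).card
      = B.card := by
    apply Finset.card_image_of_injective
    intro ⟨p, q⟩ ⟨p', q'⟩ h
    simp only [Prod.mk.injEq] at h
    exact Prod.ext (flipP_inj h.1) (flipP_inj h.2)
  have hgcard : (B.image (fun pq : Fin (2 * k) × Fin (2 * k) => (pq.2, pq.1))).card = B.card := by
    apply Finset.card_image_of_injective
    intro ⟨p, q⟩ ⟨p', q'⟩ h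
    simp only [Prod.mk.injEq] at h
    exact Prod.ext h.2 h.1
  have hmain : invNum π = 2 * invWord k a b + k := by
    rw [hAcard, hsplit, Finset.card_union_of_disjoint hd2, Finset.card_union_of_disjoint hd1,
      hFcard, hfcard, hgcard, hBcard]
    ring
  omega
end

section
/- The W-set of the involution α' = (1,2)(3,4)···(2k−1,2k) viewed inside the poset of all involutions of S_{2k} is the singleton {w*}, where w* = [2,1,4,3,...,2k,2k−1]: that is, w* is the unique permutation with m(w*)·id = α' and ℓ(w*) = L(α') = k. -/
/-- The fixed-point free involution `α' = (1,2)(3,4)⋯(2k−1,2k)` of `S_{2k}`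
(0-indexed: it swaps `2m` and `2m+1` for each `m`). -/
def alpha (k : ℕ) : Equiv.Perm (Fin (2 * k)) :=
  Function.Involutive.toPerm
    (fun x => ⟨2 * ((x : ℕ) / 2) + (1 - (x : ℕ) % 2), by have := x.2; omega⟩)
    (by intro x; apply Fin.ext; simp only [Fin.val_mk]; omega)

/-- `m(w)·π` computed along a word of simple-transposition indices, applied right to left. -/
def mWord (n : ℕ) (l : List ℕ) (π : Equiv.Perm (Fin n)) : Equiv.Perm (Fin n) :=
  l.foldr (RS n) π

-- partial alpha: fixes points < 2j, swaps pairs beyond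
def alphaP (k j : ℕ) : Equiv.Perm (Fin (2 * k)) :=
  Function.Involutive.toPerm
    (fun x => if (x : ℕ) < 2 * j then x else
      ⟨2 * ((x : ℕ) / 2) + (1 - (x : ℕ) % 2), by have := x.2; omega⟩)
    (by intro x; apply Fin.ext
        simp only []
        split_ifs <;> simp_all [Fin.ext_iff] <;> omega)

lemma alpha_apply (k : ℕ) (x : Fin (2*k)) :
    ((alpha k x : Fin (2*k)) : ℕ) = 2 * ((x : ℕ) / 2) + (1 - (x : ℕ) % 2) := rfl

lemma alphaP_apply (k j : ℕ) (x : Fin (2*k)) :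
    ((alphaP k j x : Fin (2*k)) : ℕ) =
      if (x : ℕ) < 2 * j then (x : ℕ) else 2 * ((x : ℕ) / 2) + (1 - (x : ℕ) % 2) := by
  simp only [alphaP, Function.Involutive.toPerm, Equiv.coe_fn_mk]
  split_ifs <;> rfl

lemma alphaP_zero (k : ℕ) : alphaP k 0 = alpha k := by
  ext x
  rw [alphaP_apply, alpha_apply]
  simp

lemma alphaP_top (k : ℕ) : alphaP k k = 1 := by
  ext x
  rw [alphaP_apply]
  have := x.2
  have h : (x:ℕ) < 2*k := x.2
  simp [h, Equiv.Perm.one_apply]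

lemma sNat_apply {n i : ℕ} (h : i + 1 < n) (x : Fin n) :
    ((sNat n i x : Fin n) : ℕ) =
      if (x:ℕ) = i then i+1 else if (x:ℕ) = i+1 then i else (x:ℕ) := by
  simp only [sNat, dif_pos h, Equiv.swap_apply_def]
  split_ifs <;> simp_all [Fin.ext_iff]

lemma sNat_mul_alphaP (k j : ℕ) (hj : j < k) :
    sNat (2*k) (2*j) * alphaP k (j+1) = alphaP k j := by
  ext x
  have hx := x.2
  rw [Equiv.Perm.mul_apply, sNat_apply (by omega), alphaP_apply, alphaP_apply]
  split_ifs <;> omega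

lemma alphaP_mul_sNat (k j : ℕ) (hj : j < k) :
    alphaP k j * sNat (2*k) (2*j) = alphaP k (j+1) := by
  ext x
  have hx := x.2
  rw [Equiv.Perm.mul_apply, alphaP_apply, sNat_apply (by omega), alphaP_apply]
  split_ifs <;> omega

lemma RS_step (k j : ℕ) (hj : j < k) :
    RS (2*k) (2*j) (alphaP k (j+1)) = alphaP k j := by
  have hconj : sNat (2*k) (2*j) * alphaP k (j+1) * sNat (2*k) (2*j) = alphaP k (j+1) := by
    rw [sNat_mul_alphaP k j hj, alphaP_mul_sNat k j hj]
  have hfix : ∀ x : Fin (2*k), ((x : ℕ) = 2*j ∨ (x : ℕ) = 2*j + 1) → alphaP k (j+1) x = x := by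
    intro x hx
    apply Fin.ext
    rw [alphaP_apply]
    split_ifs <;> omega
  rw [RS, hconj, if_neg (by omega), if_pos hfix, sNat_mul_alphaP k j hj]

lemma mWord_range (k : ℕ) : ∀ j ≤ k,
    mWord (2*k) ((List.range j).map (2 * ·)) (alphaP k j) = alpha k := by
  intro j
  induction j with
  | zero => intro _; simp [mWord, alphaP_zero]
  | succ j ih =>
    intro hj
    rw [List.range_succ, List.map_append, mWord, List.foldr_append]
    show mWord (2*k) _ (List.foldr (RS (2*k)) (alphaP k (j+1)) [2*j]) = _
    simp only [List.foldr_cons, List.foldr_nil]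
    rw [RS_step k j (by omega)]
    exact ih (by omega)

lemma mWord_main (k : ℕ) :
    mWord (2*k) ((List.range k).map (2 * ·)) 1 = alpha k := by
  have := mWord_range k k le_rfl
  rwa [alphaP_top] at this

lemma prod_range (k : ℕ) : ∀ j ≤ k,
    (((List.range j).map (2 * ·)).map (sNat (2*k))).prod * alphaP k j = alpha k := by
  intro j
  induction j with
  | zero => intro _; simp [alphaP_zero]
  | succ j ih =>
    intro hj
    rw [List.range_succ]
    simp only [List.map_append, List.map_cons, List.map_nil, List.prod_append,
      List.prod_cons, List.prod_nil, mul_one]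
    rw [mul_assoc, sNat_mul_alphaP k j (by omega)]
    exact ih (by omega)

lemma prod_main (k : ℕ) :
    (((List.range k).map (2 * ·)).map (sNat (2*k))).prod = alpha k := by
  have := prod_range k k le_rfl
  rwa [alphaP_top, mul_one] at this

def pairEmb (k : ℕ) : Fin k ↪ Fin (2*k) × Fin (2*k) where
  toFun m := (⟨2*(m:ℕ), by have := m.2; omega⟩, ⟨2*(m:ℕ)+1, by have := m.2; omega⟩)
  inj' := by
    intro a b hab
    simp only [Prod.mk.injEq, Fin.mk.injEq] at hab
    exact Fin.ext (by omega)

lemma invNum_alpha (k : ℕ) : invNum (alpha k) = k := by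
  have : (Finset.univ.filter fun p : Fin (2*k) × Fin (2*k) =>
      p.1 < p.2 ∧ alpha k p.2 < alpha k p.1) =
      (Finset.univ : Finset (Fin k)).map (pairEmb k) := by
    ext p
    simp only [Finset.mem_filter, Finset.mem_univ, true_and, Finset.mem_map,
      pairEmb, Function.Embedding.coeFn_mk, Prod.ext_iff, Fin.lt_def, Fin.ext_iff]
    rw [alpha_apply, alpha_apply]
    constructor
    · rintro ⟨h1, h2⟩
      exact ⟨⟨(p.1 : ℕ)/2, by have := p.2.2; omega⟩,
        (by omega : 2 * ((p.1:ℕ)/2) = (p.1:ℕ)), (by omega : 2 * ((p.1:ℕ)/2) + 1 = (p.2:ℕ))⟩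
    · rintro ⟨m, hm1, hm2⟩
      change 2 * (m:ℕ) = (p.1:ℕ) at hm1
      change 2 * (m:ℕ) + 1 = (p.2:ℕ) at hm2
      omega
  rw [invNum, this, Finset.card_map, Finset.card_univ, Fintype.card_fin]

lemma support_alpha (k : ℕ) : (alpha k).support = Finset.univ := by
  ext x
  simp only [Equiv.Perm.mem_support, Finset.mem_univ, iff_true]
  intro h
  have := congrArg (Fin.val) h
  rw [alpha_apply] at this
  omega

lemma numTwoCycles_eq_s15 {n : ℕ} (π : Equiv.Perm (Fin n)) :
    (Finset.univ.filter fun i : Fin n => π i ≠ i) = π.support := by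
  ext x; simp [Equiv.Perm.mem_support]

lemma sNat_inv (n i : ℕ) : (sNat n i)⁻¹ = sNat n i := by
  rw [sNat]; split_ifs <;> simp

lemma card_support_conj' {n : ℕ} (i : ℕ) (π : Equiv.Perm (Fin n)) :
    (sNat n i * π * sNat n i).support.card = π.support.card := by
  nth_rewrite 2 [← sNat_inv]
  exact Equiv.Perm.card_support_conj

lemma card_support_B {n i : ℕ} (h : i + 1 < n) (π : Equiv.Perm (Fin n))
    (hfix : ∀ x : Fin n, ((x : ℕ) = i ∨ (x : ℕ) = i + 1) → π x = x) :
    (sNat n i * π).support.card = π.support.card + 2 := by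
  set a : Fin n := ⟨i, Nat.lt_of_succ_lt h⟩
  set b : Fin n := ⟨i+1, h⟩
  have hpa : π a = a := hfix a (Or.inl rfl)
  have hpb : π b = b := hfix b (Or.inr rfl)
  have hab : a ≠ b := by simp [a, b, Fin.ext_iff]
  have hs : sNat n i = Equiv.swap a b := by rw [sNat, dif_pos h]
  have hsupp : (sNat n i * π).support = insert a (insert b π.support) := by
    ext x
    simp only [Equiv.Perm.mem_support, Finset.mem_insert, Equiv.Perm.mul_apply, hs]
    by_cases hxa : x = a
    · subst hxa; simp [hpa, Equiv.swap_apply_left, hab, hab.symm]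
    · by_cases hxb : x = b
      · subst hxb; simp [hpb, Equiv.swap_apply_right, hab, hab.symm]
      · have h1 : π x ≠ a := fun hc => hxa (π.injective (hc.trans hpa.symm))
        have h2 : π x ≠ b := fun hc => hxb (π.injective (hc.trans hpb.symm))
        rw [Equiv.swap_apply_of_ne_of_ne h1 h2]
        simp [hxa, hxb]
  rw [hsupp, Finset.card_insert_of_notMem, Finset.card_insert_of_notMem]
  · simp [Equiv.Perm.mem_support, hpb]
  · simp [Equiv.Perm.mem_support, hpa, hab]

lemma main_lemma (n : ℕ) (l : List ℕ) (π : Equiv.Perm (Fin n)) :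
    (mWord n l π).support.card ≤ π.support.card + 2 * l.length ∧
    ((mWord n l π).support.card = π.support.card + 2 * l.length →
      mWord n l π = (l.map (sNat n)).prod * π) := by
  induction l with
  | nil => simp [mWord]
  | cons i t ih =>
    have hcons : mWord n (i :: t) π = RS n i (mWord n t π) := rfl
    set ρ := mWord n t π with hρ
    obtain ⟨ih1, ih2⟩ := ih
    rw [hcons, RS]
    split_ifs with hA hB
    · -- case A: conjugation
      constructor
      · rw [card_support_conj']
        simp only [List.length_cons]
        omega
      · intro heq
        rw [card_support_conj'] at heq
        simp only [List.length_cons] at heq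
        omega
    · -- case B
      by_cases hn : i + 1 < n
      · have hc := card_support_B hn ρ hB
        constructor
        · simp only [List.length_cons]; omega
        · intro heq
          rw [hc] at heq
          simp only [List.length_cons] at heq
          have := ih2 (by omega)
          rw [this, List.map_cons, List.prod_cons, mul_assoc]
      · have h1 : sNat n i = 1 := by rw [sNat, dif_neg hn]
        rw [h1, one_mul]
        constructor
        · simp only [List.length_cons]; omega
        · intro heq
          simp only [List.length_cons] at heq
          omega
    · -- case C
      constructor
      · simp only [List.length_cons]; omega
      · intro heq
        simp only [List.length_cons] at heq
        omega

/-- The W-set of `α' = (1,2)(3,4)⋯(2k−1,2k)` inside the poset of all involutions of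
`S_{2k}` is the singleton `{w*}`, where `w* = [2,1,4,3,…,2k,2k−1]` (the permutation
`alpha k` itself): `w` satisfies `m(w)·id = α'` (via a reduced word) with
`ℓ(w) = L(α') = k` if and only if `w = alpha k`. -/
theorem stmt15 (k : ℕ) (w : Equiv.Perm (Fin (2 * k))) :
    ((∃ l : List ℕ, (l.map (sNat (2 * k))).prod = w ∧ l.length = invNum w ∧
        mWord (2 * k) l 1 = alpha k) ∧
      invNum w = (invNum (alpha k) + numTwoCycles (alpha k)) / 2 ∧
      (invNum (alpha k) + numTwoCycles (alpha k)) / 2 = k) ↔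
    w = alpha k := by
  have hsupp : (alpha k).support.card = 2 * k := by
    rw [support_alpha, Finset.card_univ, Fintype.card_fin]
  have hnum : numTwoCycles (alpha k) = k := by
    rw [numTwoCycles, numTwoCycles_eq_s15, hsupp]
    omega
  have hLk : (invNum (alpha k) + numTwoCycles (alpha k)) / 2 = k := by
    rw [invNum_alpha, hnum]
    omega
  constructor
  · rintro ⟨⟨l, hprod, hlen, hm⟩, h2, _⟩
    have hlenk : l.length = k := by rw [hlen, h2, hLk]
    have heq : (mWord (2 * k) l 1).support.card =
        (1 : Equiv.Perm (Fin (2 * k))).support.card + 2 * l.length := by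
      rw [hm, hsupp, Equiv.Perm.support_one, Finset.card_empty, hlenk]
      omega
    have := (main_lemma (2 * k) l 1).2 heq
    rw [hm, mul_one, hprod] at this
    exact this.symm
  · intro h
    subst h
    refine ⟨⟨(List.range k).map (2 * ·), prod_main k, ?_, mWord_main k⟩, ?_, hLk⟩
    · simp [invNum_alpha]
    · rw [invNum_alpha, hnum]
      omega
end

section
/- Each covering relation of the weak order on (p,q)-clans increases the rank function L^±(π) = pq − L(π) by exactly 1, where L(π) = (ℓ(π) + k)/2 is computed from the underlying involution π with k 2-cycles. Concretely: if π' ⋖_i π is a cover (of any of the types IA, IB, IC, II), then L(π) = L(π') − 1, so L^±(π) = L^±(π') + 1. -/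
/-- A `(p,q)`-clan: an involution of `S_{p+q}` together with a sign (`true` = `+`,
`false` = `−`) attached to each fixed point, such that `#(+) − #(−) = p − q`.
(Non-fixed points are assigned the junk value `false`.) -/
structure Clan (p q : ℕ) where
  π : Equiv.Perm (Fin (p + q))
  invol : π * π = 1
  sign : Fin (p + q) → Bool
  signFix : ∀ i, π i ≠ i → sign i = false
  charge : (Finset.univ.filter fun i => π i = i ∧ sign i = true).card + q =
    (Finset.univ.filter fun i => π i = i ∧ sign i = false).card + p

/-- The covering relation `c' ⋖ c` of the weak order on `(p,q)`-clans, at consecutive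
positions `a`, `b = a+1`.  Type I (IA/IB/IC): `c.π = s c'.π s` with
`ℓ(c.π) = ℓ(c'.π) − 2`, the signs carried along by `s = (a,b)`.  Type II: `c'` has the
2-cycle `(a,b)`, which is replaced in `c` by two oppositely-signed fixed points, all other
signs unchanged. -/
def ClanCov {p q : ℕ} (a b : Fin (p + q)) (c' c : Clan p q) : Prop :=
  (b : ℕ) = (a : ℕ) + 1 ∧
  ((c.π = Equiv.swap a b * c'.π * Equiv.swap a b ∧ invNum c.π + 2 = invNum c'.π ∧
      ∀ x, c'.π x = x → c.sign (Equiv.swap a b x) = c'.sign x) ∨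
    (c'.π a = b ∧ c.π = Equiv.swap a b * c'.π ∧ c.sign a = !c.sign b ∧
      ∀ x, x ≠ a → x ≠ b → c.sign x = c'.sign x))

lemma even_card_invol {α : Type*} [DecidableEq α] (s : Finset α) (f : α → α)
    (hmem : ∀ x ∈ s, f x ∈ s) (hinv : ∀ x ∈ s, f (f x) = x) (hne : ∀ x ∈ s, f x ≠ x) :
    Even s.card := by
  induction s using Finset.strongInduction with
  | _ s ih =>
    rcases s.eq_empty_or_nonempty with rfl | ⟨x, hx⟩
    · simp
    · have hfx := hmem x hx
      have hxne := hne x hx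
      have hsub : {x, f x} ⊆ s := by
        intro y hy; simp at hy; rcases hy with rfl | rfl <;> assumption
      have hss : s \ {x, f x} ⊂ s := by
        apply Finset.sdiff_ssubset hsub; exact ⟨x, by simp⟩
      have hmem' : ∀ y ∈ s \ {x, f x}, f y ∈ s \ {x, f x} := by
        intro y hy
        simp only [Finset.mem_sdiff, Finset.mem_insert, Finset.mem_singleton] at hy ⊢
        obtain ⟨hys, hyne⟩ := hy
        refine ⟨hmem y hys, ?_⟩
        push_neg at hyne ⊢
        constructor
        · intro h; apply hyne.2; rw [← hinv y hys, h]
        · intro h; apply hyne.1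
          have := hinv y hys
          rw [h, hinv x hx] at this; exact this.symm
      have heven := ih _ hss (fun y hy => hmem' y hy)
        (fun y hy => hinv y (Finset.mem_sdiff.mp hy).1)
        (fun y hy => hne y (Finset.mem_sdiff.mp hy).1)
      have hcard : s.card = (s \ {x, f x}).card + 2 := by
        rw [Finset.card_sdiff_of_subset hsub]
        have h2 : ({x, f x} : Finset α).card = 2 := by
          rw [Finset.card_insert_of_notMem (by simp [Ne.symm hxne]), Finset.card_singleton]
        have h2le : 2 ≤ s.card := h2 ▸ Finset.card_le_card hsub
        omega
      rw [hcard]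
      exact heven.add (by decide)

lemma two_mul_card_lt_pairs {n : ℕ} (s : Finset (Fin n)) :
    2 * ((s ×ˢ s).filter fun p => p.1 < p.2).card + s.card = s.card * s.card := by
  have hbij : ((s ×ˢ s).filter fun p => p.1 < p.2).card
      = ((s ×ˢ s).filter fun p => p.2 < p.1).card := by
    apply Finset.card_bij' (fun p _ => p.swap) (fun p _ => p.swap) <;>
      simp [Finset.mem_filter, Finset.mem_product] <;> tauto
  have hunion : ((s ×ˢ s).filter fun p => p.1 < p.2) ∪ ((s ×ˢ s).filter fun p => p.2 < p.1)
      = s.offDiag := by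
    rw [← Finset.filter_or]
    ext p
    simp only [Finset.mem_filter, Finset.mem_product, Finset.mem_offDiag]
    constructor
    · rintro ⟨⟨h1, h2⟩, h3⟩
      exact ⟨h1, h2, by rcases h3 with h | h; exact ne_of_lt h; exact (ne_of_lt h).symm⟩
    · rintro ⟨h1, h2, h3⟩
      exact ⟨⟨h1, h2⟩, lt_or_gt_of_ne h3⟩
  have hdisj : Disjoint ((s ×ˢ s).filter fun p => p.1 < p.2)
      ((s ×ˢ s).filter fun p => p.2 < p.1) := by
    rw [Finset.disjoint_left]
    intro p hp hp'
    simp only [Finset.mem_filter] at hp hp'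
    exact absurd (lt_trans hp.2 hp'.2) (lt_irrefl p.1)
  have hu := Finset.card_union_of_disjoint hdisj
  rw [hunion, ← hbij, Finset.offDiag_card] at hu
  have hle : s.card ≤ s.card * s.card := by
    rcases Nat.eq_zero_or_pos s.card with h | h
    · simp [h]
    · exact Nat.le_mul_of_pos_left _ h
  omega

lemma swap_lt_of_lt {n : ℕ} {a b : Fin n} (hb : (b : ℕ) = (a : ℕ) + 1) {x y : Fin n}
    (hxy : x < y) (hne : ¬(x = a ∧ y = b)) : Equiv.swap a b x < Equiv.swap a b y := by
  simp only [Equiv.swap_apply_def]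
  split_ifs <;>
    (simp only [Fin.lt_def, Fin.ext_iff, not_and] at *; omega)

/-- The key upper bound: `ℓ(π) + k ≤ 2pq` for any `(p,q)`-clan. -/
lemma clan_bound (p q : ℕ) (c : Clan p q) :
    invNum c.π + numTwoCycles c.π ≤ 2 * (p * q) := by
  set n := p + q with hn
  have hinvol : ∀ x, c.π (c.π x) = x := by
    intro x
    have := c.invol
    rw [Equiv.Perm.ext_iff] at this
    simpa [Equiv.Perm.mul_apply] using this x
  set M := (Finset.univ.filter fun i : Fin n => c.π i ≠ i) with hM
  set F := (Finset.univ.filter fun i : Fin n => c.π i = i) with hF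
  -- M has even cardinality
  have hMeven : Even M.card := by
    apply even_card_invol M c.π
    · intro x hx
      simp only [hM, Finset.mem_filter, Finset.mem_univ, true_and] at hx ⊢
      intro h
      exact hx (c.π.injective h)
    · intro x _; exact hinvol x
    · intro x hx
      simp only [hM, Finset.mem_filter, Finset.mem_univ, true_and] at hx
      exact hx
  -- M.card + F.card = n
  have hMF : F.card + M.card = n := by
    have := Finset.card_filter_add_card_filter_not (s := Finset.univ)
      (p := fun i : Fin n => c.π i = i)
    simpa [hM, hF] using this
  -- signed fixed point counts
  set Ep := F.filter (fun i => c.sign i = true) with hEp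
  set Em := F.filter (fun i => c.sign i = false) with hEm
  have hsigns : Ep.card + Em.card = F.card := by
    have := Finset.card_filter_add_card_filter_not (s := F)
      (p := fun i : Fin n => c.sign i = true)
    have hneg : F.filter (fun i => ¬(c.sign i = true)) = Em := by
      ext x; simp [hEm, Bool.not_eq_true]
    rw [hneg] at this
    exact this
  have hEp' : (Finset.univ.filter fun i : Fin n => c.π i = i ∧ c.sign i = true) = Ep := by
    ext x; simp [hEp, hF, Finset.mem_filter]
  have hEm' : (Finset.univ.filter fun i : Fin n => c.π i = i ∧ c.sign i = false) = Em := by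
    ext x; simp [hEm, hF, Finset.mem_filter]
  have hcharge : Ep.card + q = Em.card + p := by
    have h := c.charge
    rw [hEp', hEm'] at h
    exact h
  -- k = numTwoCycles, with M.card = 2k, k ≤ p, k ≤ q
  obtain ⟨k, hk⟩ := hMeven
  have hknum : numTwoCycles c.π = k := by
    show (Finset.univ.filter fun i : Fin (p + q) => c.π i ≠ i).card / 2 = k
    rw [← hM, hk]; omega
  have hkp : k ≤ p ∧ k ≤ q ∧ F.card + 2 * k = p + q := by omega
  -- the inversion set avoids pairs of fixed points
  set S := (Finset.univ.filter fun p : Fin n × Fin n => p.1 < p.2 ∧ c.π p.2 < c.π p.1) with hS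
  set B := ((F ×ˢ F).filter fun p : Fin n × Fin n => p.1 < p.2) with hB
  set A := ((Finset.univ ×ˢ Finset.univ : Finset (Fin n × Fin n)).filter
    fun p => p.1 < p.2) with hA
  have hSA : S ⊆ A := by
    intro x hx
    rw [hS, Finset.mem_filter] at hx
    rw [hA, Finset.mem_filter]
    exact ⟨Finset.mem_product.mpr ⟨Finset.mem_univ _, Finset.mem_univ _⟩, hx.2.1⟩
  have hBA : B ⊆ A := by
    intro x hx
    rw [hB, Finset.mem_filter] at hx
    rw [hA, Finset.mem_filter]
    exact ⟨Finset.mem_product.mpr ⟨Finset.mem_univ _, Finset.mem_univ _⟩, hx.2⟩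
  have hSB : Disjoint S B := by
    rw [Finset.disjoint_left]
    intro x hx hx'
    simp only [hS, hB, hF, Finset.mem_filter, Finset.mem_product, Finset.mem_univ,
      true_and] at hx hx'
    obtain ⟨hlt, hinv⟩ := hx
    obtain ⟨⟨h1, h2⟩, _⟩ := hx'
    rw [h1, h2] at hinv
    exact absurd (lt_trans hlt hinv) (lt_irrefl x.1)
  have hcardle : S.card + B.card ≤ A.card := by
    rw [← Finset.card_union_of_disjoint hSB]
    exact Finset.card_le_card (Finset.union_subset hSA hBA)
  have hAcard := two_mul_card_lt_pairs (Finset.univ : Finset (Fin n))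
  have hBcard := two_mul_card_lt_pairs F
  rw [← hA] at hAcard
  rw [← hB] at hBcard
  have hncard : (Finset.univ : Finset (Fin n)).card = n := by simp
  rw [hncard] at hAcard
  -- now pure arithmetic
  obtain ⟨hkp1, hkq1, hfk⟩ := hkp
  obtain ⟨p', rfl⟩ := Nat.exists_eq_add_of_le hkp1
  obtain ⟨q', rfl⟩ := Nat.exists_eq_add_of_le hkq1
  have hFc : F.card = p' + q' := by omega
  rw [invNum, ← hS, hknum]
  have hnval : n = 2 * k + p' + q' := by omega
  nlinarith [Nat.zero_le (p' * q'), hAcard, hBcard, hcardle, hFc, hnval]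

/-- Each covering relation `c' ⋖ c` of the weak order on `(p,q)`-clans decreases
`L(π) = (ℓ(π)+k)/2` by exactly 1 and hence increases the rank `L^±(π) = pq − L(π)` by
exactly 1. -/
theorem stmt19 (p q : ℕ) (a b : Fin (p + q)) (c' c : Clan p q)
    (h : ClanCov a b c' c) :
    (invNum c.π + numTwoCycles c.π) / 2 + 1 = (invNum c'.π + numTwoCycles c'.π) / 2 ∧
    p * q - (invNum c.π + numTwoCycles c.π) / 2 =
      (p * q - (invNum c'.π + numTwoCycles c'.π) / 2) + 1 := by
  have hbd := clan_bound p q c'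
  obtain ⟨hb, hI | hII⟩ := h
  · -- Type I: conjugation
    obtain ⟨hconj, hinv2, -⟩ := hI
    have htwo : numTwoCycles c.π = numTwoCycles c'.π := by
      have hsupp : ∀ (w : Equiv.Perm (Fin (p + q))),
          (Finset.univ.filter fun i => w i ≠ i) = w.support := by
        intro w; ext x; simp [Equiv.Perm.mem_support]
      rw [numTwoCycles, numTwoCycles, hsupp, hsupp]
      have : c.π = Equiv.swap a b * c'.π * (Equiv.swap a b)⁻¹ := by
        rw [Equiv.swap_inv]; exact hconj
      rw [this, Equiv.Perm.card_support_conj]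
    omega
  · -- Type II
    obtain ⟨hab, hc, -, -⟩ := hII
    have hanb : a ≠ b := by
      intro h; rw [h] at hb; omega
    have haltb : a < b := by rw [Fin.lt_def]; omega
    have hinvol' : ∀ x, c'.π (c'.π x) = x := by
      intro x
      have := c'.invol
      rw [Equiv.Perm.ext_iff] at this
      simpa [Equiv.Perm.mul_apply] using this x
    have hba : c'.π b = a := by rw [← hab, hinvol']
    have hcx : ∀ x, c.π x = Equiv.swap a b (c'.π x) := by
      intro x; rw [hc]; rfl
    -- numTwoCycles drops by 1
    have hMc : (Finset.univ.filter fun i => c.π i ≠ i)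
        = (Finset.univ.filter fun i => c'.π i ≠ i) \ {a, b} := by
      ext x
      simp only [Finset.mem_filter, Finset.mem_univ, true_and, Finset.mem_sdiff,
        Finset.mem_insert, Finset.mem_singleton]
      constructor
      · intro hx
        rcases eq_or_ne x a with rfl | hxa
        · exact absurd (by rw [hcx, hab, Equiv.swap_apply_right]) hx
        rcases eq_or_ne x b with rfl | hxb
        · exact absurd (by rw [hcx, hba, Equiv.swap_apply_left]) hx
        · have hpa : c'.π x ≠ a := fun h => hxb (by rw [← hinvol' x, h, hab])
          have hpb : c'.π x ≠ b := fun h => hxa (by rw [← hinvol' x, h, hba])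
          rw [hcx, Equiv.swap_apply_of_ne_of_ne hpa hpb] at hx
          exact ⟨hx, by push_neg; exact ⟨hxa, hxb⟩⟩
      · rintro ⟨hx, hxab⟩
        push_neg at hxab
        obtain ⟨hxa, hxb⟩ := hxab
        have hpa : c'.π x ≠ a := fun h => hxb (by rw [← hinvol' x, h, hab])
        have hpb : c'.π x ≠ b := fun h => hxa (by rw [← hinvol' x, h, hba])
        rw [hcx, Equiv.swap_apply_of_ne_of_ne hpa hpb]
        exact hx
    have habM : a ∈ (Finset.univ.filter fun i => c'.π i ≠ i) ∧
        b ∈ (Finset.univ.filter fun i => c'.π i ≠ i) := by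
      constructor <;> simp only [Finset.mem_filter, Finset.mem_univ, true_and]
      · rw [hab]; exact Ne.symm hanb
      · rw [hba]; exact hanb
    have hMcard : (Finset.univ.filter fun i => c.π i ≠ i).card + 2
        = (Finset.univ.filter fun i => c'.π i ≠ i).card := by
      rw [hMc, Finset.card_sdiff_of_subset (by
        intro y hy; simp only [Finset.mem_insert, Finset.mem_singleton] at hy
        rcases hy with rfl | rfl
        · exact habM.1
        · exact habM.2)]
      have h2 : ({a, b} : Finset (Fin (p + q))).card = 2 := by
        rw [Finset.card_insert_of_notMem (by simp [hanb]), Finset.card_singleton]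
      have h2le : 2 ≤ (Finset.univ.filter fun i => c'.π i ≠ i).card := by
        rw [← h2]
        apply Finset.card_le_card
        intro y hy; simp only [Finset.mem_insert, Finset.mem_singleton] at hy
        rcases hy with rfl | rfl
        · exact habM.1
        · exact habM.2
      omega
    -- invNum drops by 1
    have hSc : (Finset.univ.filter fun pr : Fin (p + q) × Fin (p + q) =>
          pr.1 < pr.2 ∧ c.π pr.2 < c.π pr.1)
        = (Finset.univ.filter fun pr : Fin (p + q) × Fin (p + q) =>
          pr.1 < pr.2 ∧ c'.π pr.2 < c'.π pr.1).erase (a, b) := by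
      ext pr
      obtain ⟨i, j⟩ := pr
      simp only [Finset.mem_filter, Finset.mem_univ, true_and, Finset.mem_erase, Ne,
        Prod.mk.injEq, not_and]
      constructor
      · rintro ⟨hij, hlt⟩
        have hne_ab : ¬(i = a ∧ j = b) := by
          rintro ⟨hia, hjb⟩
          rw [hia, hjb, hcx a, hcx b, hba, hab, Equiv.swap_apply_left,
            Equiv.swap_apply_right] at hlt
          exact absurd (lt_trans haltb hlt) (lt_irrefl a)
        rw [hcx, hcx] at hlt
        -- from swap (π' j) < swap (π' i) deduce π' j < π' i
        by_cases hcase : Equiv.swap a b (c'.π j) = a ∧ Equiv.swap a b (c'.π i) = b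
        · -- then π' j = a? swap u = a → u = b? swap is involution: u = swap a = b
          obtain ⟨h1, h2⟩ := hcase
          have hu : c'.π j = b := by
            have := congrArg (Equiv.swap a b) h1
            rwa [Equiv.swap_apply_self, Equiv.swap_apply_left] at this
          have hv : c'.π i = a := by
            have := congrArg (Equiv.swap a b) h2
            rwa [Equiv.swap_apply_self, Equiv.swap_apply_right] at this
          have hja : j = a := by rw [← hinvol' j, hu, hba]
          have hib : i = b := by rw [← hinvol' i, hv, hab]
          rw [hja, hib] at hij
          exact absurd (lt_trans haltb hij) (lt_irrefl a)
        · have := swap_lt_of_lt hb (x := Equiv.swap a b (c'.π j))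
            (y := Equiv.swap a b (c'.π i)) hlt hcase
          rw [Equiv.swap_apply_self, Equiv.swap_apply_self] at this
          refine ⟨fun hia hjb => ?_, hij, this⟩
          exact hne_ab ⟨hia, hjb⟩
      · rintro ⟨hneq, hij, hlt⟩
        refine ⟨hij, ?_⟩
        rw [hcx, hcx]
        apply swap_lt_of_lt hb hlt
        rintro ⟨h1, h2⟩
        have hjb : j = b := by rw [← hinvol' j, h1, hab]
        have hia : i = a := by rw [← hinvol' i, h2, hba]
        exact hneq hia hjb
    have habS : (a, b) ∈ (Finset.univ.filter fun pr : Fin (p + q) × Fin (p + q) =>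
        pr.1 < pr.2 ∧ c'.π pr.2 < c'.π pr.1) := by
      simp only [Finset.mem_filter, Finset.mem_univ, true_and]
      exact ⟨haltb, by rw [hab, hba]; exact haltb⟩
    have hScard : invNum c.π + 1 = invNum c'.π := by
      rw [invNum, invNum, hSc, Finset.card_erase_of_mem habS]
      have : 1 ≤ (Finset.univ.filter fun pr : Fin (p + q) × Fin (p + q) =>
          pr.1 < pr.2 ∧ c'.π pr.2 < c'.π pr.1).card :=
        Finset.card_pos.mpr ⟨(a, b), habS⟩
      omega
    simp only [numTwoCycles] at hbd ⊢
    omega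
end
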